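/- For |q|<1, the identity ∑_{n∈ℤ} sgn(n) q^{n(3n-1)/2} = -∑_{n≥1} (-1)^n q^{n(n+1)/2}/(-q;q)_n holds, where the left side equals ∑_{n≥1}(1-q^n)q^{n(3n-1)/2}. -/

import Mathlib

open scoped BigOperators

/-- The finite q-Pochhammer symbol `(a;q)_n = ∏_{j=0}^{n-1} (1 - a q^j)`. -/
noncomputable def qPoch (a q : ℂ) (n : ℕ) : ℂ := ∏ j ∈ Finset.range n, (1 - a * q ^ j)

lemma qPoch_succ (q : ℂ) (n : ℕ) :
    qPoch (-q) q (n+1) = qPoch (-q) q n * (1 + q * q ^ n) := by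
  unfold qPoch; rw [Finset.prod_range_succ]; ring

lemma keyId (q x : ℂ) (N : ℕ) :
    (1+x) * (∑ k ∈ Finset.range N, (-1:ℂ)^k * x^k * qPoch (-q) q k)
    + q * x * (∑ k ∈ Finset.range (N+1), (-1:ℂ)^k * (x*q)^k * qPoch (-q) q k)
    = 1 + (-1:ℂ)^(N+1) * x^N * (1-x) * qPoch (-q) q (N+1)
      - (-1:ℂ)^N * x^N * (x - q^(N+1)) * qPoch (-q) q N := by
  induction N with
  | zero => simp [qPoch_succ, qPoch]; ring
  | succ N ih =>
      rw [Finset.sum_range_succ, Finset.sum_range_succ]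
      simp only [qPoch_succ] at ih ⊢
      linear_combination ih

lemma two_dvd_t (n : ℕ) : 2 ∣ (n+1)*(n+2) := by
  rcases Nat.even_or_odd n with ⟨t,ht⟩|⟨t,ht⟩
  · exact ⟨(2*t+1)*(t+1), by subst ht; ring⟩
  · exact ⟨(t+1)*(n+2), by subst ht; ring⟩

lemma two_dvd_e (n : ℕ) : 2 ∣ (n+1)*(3*n+2) := by
  rcases Nat.even_or_odd n with ⟨t,ht⟩|⟨t,ht⟩
  · exact ⟨(2*t+1)*(3*t+1), by subst ht; ring⟩
  · exact ⟨(t+1)*(3*n+2), by subst ht; ring⟩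

lemma t_succ (N : ℕ) : (N+2)*(N+3)/2 = (N+1)*(N+2)/2 + (N+2) := by
  obtain ⟨a, ha⟩ := two_dvd_t N
  have hb : (N+2)*(N+3) = 2*(a + (N+2)) := by
    have : (N+2)*(N+3) = (N+1)*(N+2) + 2*(N+2) := by ring
    rw [this, ha]; ring
  rw [hb, ha]; omega

lemma e_eq (N : ℕ) : (N+1)*(3*(N+1)-1)/2 = (N+1)*(N+2)/2 + N*(N+1) := by
  obtain ⟨a, ha⟩ := two_dvd_t N
  have h3 : 3*(N+1)-1 = 3*N+2 := by omega
  have hb : (N+1)*(3*N+2) = 2*(a + N*(N+1)) := by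
    have : (N+1)*(3*N+2) = (N+1)*(N+2) + 2*(N*(N+1)) := by ring
    rw [this, ha]; ring
  rw [h3, hb, ha]
  obtain ⟨c, hc⟩ : 2 ∣ N*(N+1) := (Nat.even_mul_succ_self N).two_dvd
  omega

lemma t_ge (N : ℕ) : N + 1 ≤ (N+1)*(N+2)/2 := by
  obtain ⟨a, ha⟩ := two_dvd_t N
  have : 2*(N+1) ≤ 2*a := by
    rw [← ha]; nlinarith
  rw [ha]; omega

lemma e_ge (N : ℕ) : N + 1 ≤ (N+1)*(3*(N+1)-1)/2 := by
  have := e_eq N; have := t_ge N; omega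

lemma t_ge_mul (M N : ℕ) (h : 2*M ≤ N+2) : M*(N+1) ≤ (N+1)*(N+2)/2 := by
  obtain ⟨a, ha⟩ := two_dvd_t N
  have : 2*(M*(N+1)) ≤ 2*a := by rw [← ha]; nlinarith
  rw [ha]; omega

lemma qPoch_ne_zero (q : ℂ) (hq : ‖q‖ < 1) (n : ℕ) : qPoch (-q) q n ≠ 0 := by
  unfold qPoch
  rw [Finset.prod_ne_zero_iff]
  intro j _ h0
  have h1 : (-q) * q ^ j = 1 := by linear_combination -h0
  have : ‖(-q) * q ^ j‖ < 1 := by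
    rw [norm_mul, norm_neg, norm_pow]
    calc ‖q‖ * ‖q‖ ^ j ≤ ‖q‖ * 1 := by
          apply mul_le_mul_of_nonneg_left _ (norm_nonneg q)
          exact pow_le_one₀ (norm_nonneg q) hq.le
      _ < 1 := by simpa using hq
  rw [h1] at this; simp at this

noncomputable def Hc (q : ℂ) (N : ℕ) : ℂ :=
  ∑ k ∈ Finset.range N, (-1:ℂ)^k * (q^(N+1))^k * qPoch (-q) q k

noncomputable def Ec (q : ℂ) (N : ℕ) : ℂ :=
  (-1:ℂ)^(N+1) * q^((N+1)*(N+2)/2) * Hc q N / qPoch (-q) q N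

lemma expandAux (u v w z P P1 : ℂ) (hP : P ≠ 0) (hP1 : P1 ≠ 0)
    (h : u * (P * P1) = -(v*P) - w*P + z*P1) : u = -(v/P1) - w/P1 + z/P := by
  have e1 : -(v/P1) - w/P1 + z/P = (-(v*P) - w*P + z*P1) / (P*P1) := by
    field_simp
  rw [e1, ← h, mul_div_assoc, div_self (mul_ne_zero hP hP1), mul_one]

lemma Ec_step (q : ℂ) (hq : ‖q‖ < 1) (N : ℕ) :
    (1 - q^(N+1)) * q^((N+1)*(3*(N+1)-1)/2)
      = -((-1:ℂ)^(N+1) * q^((N+1)*(N+2)/2) / qPoch (-q) q (N+1)) - Ec q (N+1) + Ec q N := by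
  have hPN := qPoch_ne_zero q hq N
  have hPN1 := qPoch_ne_zero q hq (N+1)
  have key := keyId q (q^(N+1)) N
  have hps := qPoch_succ q N
  unfold Ec Hc
  have h1 : q^((N+1)*(3*(N+1)-1)/2) = q^((N+1)*(N+2)/2) * (q^(N+1))^N := by
    rw [e_eq N, pow_add q, ← pow_mul, Nat.mul_comm N (N+1)]
  have h2 : q^((N+1+1)*(N+1+2)/2) = q^((N+1)*(N+2)/2) * (q^(N+1)*q) := by
    rw [show (N+1+1)*(N+1+2)/2 = (N+1)*(N+2)/2 + (N+2) from t_succ N, pow_add q,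
        pow_succ q (N+1)]
  have h3 : q^(N+1+1) = q^(N+1)*q := pow_succ q (N+1)
  rw [h1, h2, h3]
  have s1 : (-1:ℂ)^(N+1) = -((-1:ℂ)^N) := by rw [pow_succ]; ring
  have s2 : (-1:ℂ)^(N+1+1) = (-1:ℂ)^N := by rw [pow_succ, pow_succ]; ring
  rw [s1] at key
  rw [s2, s1]
  apply expandAux _ _ _ _ _ _ hPN hPN1
  rcases Nat.even_or_odd N with hN | hN
  · have hs : (-1:ℂ)^N = 1 := hN.neg_one_pow
    rw [hs] at key ⊢
    linear_combination ((q^((N+1)*(N+2)/2)) * qPoch (-q) q N) * key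
      + ((q^((N+1)*(N+2)/2)) * (∑ k ∈ Finset.range N, (-1:ℂ)^k * (q^(N+1))^k * qPoch (-q) q k)) * hps
  · have hs : (-1:ℂ)^N = -1 := hN.neg_one_pow
    rw [hs] at key ⊢
    linear_combination (-(q^((N+1)*(N+2)/2)) * qPoch (-q) q N) * key
      + (-(q^((N+1)*(N+2)/2)) * (∑ k ∈ Finset.range N, (-1:ℂ)^k * (q^(N+1))^k * qPoch (-q) q k)) * hps

lemma finId (q : ℂ) (hq : ‖q‖ < 1) (N : ℕ) :
    ∑ n ∈ Finset.range N, (1 - q^(n+1)) * q^((n+1)*(3*(n+1)-1)/2)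
      = (∑ n ∈ Finset.range N, -((-1:ℂ)^(n+1) * q^((n+1)*(n+2)/2) / qPoch (-q) q (n+1)))
        - Ec q N := by
  induction N with
  | zero => simp [Ec, Hc]
  | succ N ih =>
      rw [Finset.sum_range_succ, Finset.sum_range_succ]
      have := Ec_step q hq N
      linear_combination ih + this

-- norm bounds
lemma qPoch_norm_le (q : ℂ) (hq : ‖q‖ < 1) (n : ℕ) : ‖qPoch (-q) q n‖ ≤ 2^n := by
  unfold qPoch
  rw [norm_prod]
  calc ∏ j ∈ Finset.range n, ‖1 - (-q) * q^j‖ ≤ ∏ j ∈ Finset.range n, 2 := by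
        apply Finset.prod_le_prod (fun j _ => norm_nonneg _)
        intro j _
        calc ‖1 - (-q) * q^j‖ ≤ ‖(1:ℂ)‖ + ‖(-q) * q^j‖ := norm_sub_le _ _
          _ ≤ 1 + 1 := by
              have hb : ‖(-q) * q^j‖ ≤ 1 := by
                rw [norm_mul, norm_neg, norm_pow]
                calc ‖q‖ * ‖q‖^j ≤ 1 * 1 := by
                      apply mul_le_mul hq.le (pow_le_one₀ (norm_nonneg q) hq.le)
                        (by positivity) zero_le_one
                  _ = 1 := by norm_num
              simp only [norm_one]
              linarith
          _ = 2 := by norm_num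
    _ = 2^n := by simp [Finset.prod_const, Finset.card_range]

lemma qPoch_norm_ge (q : ℂ) (hq : ‖q‖ < 1) (n : ℕ) :
    (1 - ‖q‖)^n ≤ ‖qPoch (-q) q n‖ := by
  unfold qPoch
  rw [norm_prod]
  calc (1 - ‖q‖)^n = ∏ _j ∈ Finset.range n, (1 - ‖q‖) := by
        simp [Finset.prod_const, Finset.card_range]
    _ ≤ ∏ j ∈ Finset.range n, ‖1 - (-q) * q^j‖ := by
        apply Finset.prod_le_prod (fun j _ => by linarith [hq])
        intro j _
        have h1 : ‖(-q) * q^j‖ ≤ ‖q‖ := by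
          rw [norm_mul, norm_neg, norm_pow]
          calc ‖q‖ * ‖q‖^j ≤ ‖q‖ * 1 :=
                mul_le_mul_of_nonneg_left (pow_le_one₀ (norm_nonneg q) hq.le) (norm_nonneg q)
            _ = ‖q‖ := mul_one _
        calc 1 - ‖q‖ ≤ 1 - ‖(-q) * q^j‖ := by linarith
          _ = ‖(1:ℂ)‖ - ‖(-q) * q^j‖ := by simp
          _ ≤ ‖1 - (-q) * q^j‖ := norm_sub_norm_le _ _

lemma Hc_norm_le (q : ℂ) (hq : ‖q‖ < 1) (N : ℕ) : ‖Hc q N‖ ≤ 2^N := by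
  unfold Hc
  calc ‖∑ k ∈ Finset.range N, (-1:ℂ)^k * (q^(N+1))^k * qPoch (-q) q k‖
      ≤ ∑ k ∈ Finset.range N, ‖(-1:ℂ)^k * (q^(N+1))^k * qPoch (-q) q k‖ := norm_sum_le _ _
    _ ≤ ∑ k ∈ Finset.range N, 2^k := by
        apply Finset.sum_le_sum
        intro k _
        rw [norm_mul, norm_mul, norm_pow, norm_pow, norm_neg, norm_one, one_pow, one_mul,
            norm_pow]
        calc (‖q‖^(N+1))^k * ‖qPoch (-q) q k‖ ≤ 1 * 2^k := by
              apply mul_le_mul _ (qPoch_norm_le q hq k) (norm_nonneg _) zero_le_one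
              exact pow_le_one₀ (by positivity) (pow_le_one₀ (norm_nonneg q) hq.le)
          _ = 2^k := one_mul _
    _ ≤ 2^N := by
        rw [geom_sum_eq (by norm_num : (2:ℝ) ≠ 1)]
        have : (0:ℝ) ≤ 2^N := by positivity
        norm_num

lemma summable_pow_exp (q : ℂ) (hq : ‖q‖ < 1) (e : ℕ → ℕ) (he : ∀ n, n ≤ e n) :
    Summable (fun n : ℕ => q ^ e n) := by
  apply Summable.of_norm_bounded (summable_geometric_of_lt_one (norm_nonneg q) hq)
  intro n
  rw [norm_pow]
  exact pow_le_pow_of_le_one (norm_nonneg q) hq.le (he n)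

lemma exists_M (q : ℂ) (hq : ‖q‖ < 1) :
    ∃ M : ℕ, ‖q‖ ^ M * (2 / (1 - ‖q‖)) ≤ 1/2 := by
  have h1 : 0 < 1 - ‖q‖ := by linarith
  obtain ⟨M, hM⟩ := exists_pow_lt_of_lt_one (show (0:ℝ) < (1-‖q‖)/4 by positivity) hq
  refine ⟨M, ?_⟩
  calc ‖q‖^M * (2/(1-‖q‖)) ≤ ((1-‖q‖)/4) * (2/(1-‖q‖)) :=
        mul_le_mul_of_nonneg_right hM.le (by positivity)
    _ = 1/2 := by
        rw [div_mul_div_comm, mul_comm 4 (1-‖q‖), mul_div_mul_left _ _ (ne_of_gt h1)]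
        norm_num

lemma summable_a (q : ℂ) (hq : ‖q‖ < 1) :
    Summable (fun n : ℕ => (-1:ℂ)^(n+1) * q^((n+1)*(n+2)/2) / qPoch (-q) q (n+1)) := by
  have h1 : 0 < 1 - ‖q‖ := by linarith
  obtain ⟨M, hM⟩ := exists_M q hq
  have hu : ‖q‖^M/(1-‖q‖) ≤ 1/4 := by
    have h' : ‖q‖^M*(2/(1-‖q‖)) = 2*(‖q‖^M/(1-‖q‖)) := by ring
    rw [h'] at hM; linarith
  apply Summable.of_norm_bounded_eventually_nat (g := fun n => (1/2:ℝ)^n)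
    (summable_geometric_of_lt_one (by norm_num) (by norm_num))
  filter_upwards [Filter.eventually_ge_atTop (2*M)] with n hn
  have hP := qPoch_norm_ge q hq (n+1)
  have hPpos : (0:ℝ) < (1-‖q‖)^(n+1) := by positivity
  have hnorm : ‖(-1:ℂ)^(n+1) * q^((n+1)*(n+2)/2) / qPoch (-q) q (n+1)‖
      = ‖q‖^((n+1)*(n+2)/2) / ‖qPoch (-q) q (n+1)‖ := by
    rw [norm_div, norm_mul, norm_pow, norm_pow, norm_neg, norm_one, one_pow, one_mul]
  rw [hnorm]
  have hexp : M*(n+1) ≤ (n+1)*(n+2)/2 := t_ge_mul M n (by omega)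
  calc ‖q‖^((n+1)*(n+2)/2) / ‖qPoch (-q) q (n+1)‖
      ≤ ‖q‖^(M*(n+1)) / (1-‖q‖)^(n+1) :=
        div_le_div₀ (by positivity)
          (pow_le_pow_of_le_one (norm_nonneg q) hq.le hexp) hPpos hP
    _ = (‖q‖^M / (1-‖q‖))^(n+1) := by rw [div_pow, pow_mul]
    _ ≤ (1/4)^(n+1) := pow_le_pow_left₀ (by positivity) hu (n+1)
    _ ≤ (1/2)^n := by
        calc ((1:ℝ)/4)^(n+1) ≤ (1/4)^n := by
              apply pow_le_pow_of_le_one (by norm_num) (by norm_num); omega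
          _ ≤ (1/2)^n := pow_le_pow_left₀ (by norm_num) (by norm_num) n

lemma tendsto_Ec (q : ℂ) (hq : ‖q‖ < 1) :
    Filter.Tendsto (fun N => Ec q N) Filter.atTop (nhds 0) := by
  have h1 : 0 < 1 - ‖q‖ := by linarith
  obtain ⟨M, hM⟩ := exists_M q hq
  have htend : Filter.Tendsto (fun N : ℕ => (1/2:ℝ)^N) Filter.atTop (nhds 0) :=
    tendsto_pow_atTop_nhds_zero_of_lt_one (by norm_num) (by norm_num)
  refine squeeze_zero_norm' ?_ htend
  filter_upwards [Filter.eventually_ge_atTop (2*M)] with N hN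
  have hP := qPoch_norm_ge q hq N
  have hPpos : (0:ℝ) < (1-‖q‖)^N := by positivity
  have hnorm : ‖Ec q N‖ = ‖q‖^((N+1)*(N+2)/2) * ‖Hc q N‖ / ‖qPoch (-q) q N‖ := by
    unfold Ec
    rw [norm_div, norm_mul, norm_mul, norm_pow, norm_pow, norm_neg, norm_one, one_pow,
        one_mul]
  rw [hnorm]
  have hexp : M*N ≤ (N+1)*(N+2)/2 :=
    le_trans (Nat.mul_le_mul_left M (by omega)) (t_ge_mul M N (by omega))
  calc ‖q‖^((N+1)*(N+2)/2) * ‖Hc q N‖ / ‖qPoch (-q) q N‖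
      ≤ ‖q‖^(M*N) * 2^N / (1-‖q‖)^N := by
        apply div_le_div₀ (by positivity) _ hPpos hP
        exact mul_le_mul (pow_le_pow_of_le_one (norm_nonneg q) hq.le hexp)
          (Hc_norm_le q hq N) (norm_nonneg _) (by positivity)
    _ = (‖q‖^M * (2/(1-‖q‖)))^N := by
        rw [mul_pow, pow_mul, div_pow, mul_div_assoc]
    _ ≤ (1/2)^N := pow_le_pow_left₀ (by positivity) hM N

lemma f_pos (q : ℂ) (n : ℕ) :
    ((((n:ℤ)+1).sign : ℂ)) * q ^ (((n:ℤ)+1) * (3*((n:ℤ)+1)-1)/2)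
      = q ^ ((n+1)*(3*(n+1)-1)/2) := by
  have hsign : ((n:ℤ)+1).sign = 1 := Int.sign_eq_one_of_pos (by positivity)
  obtain ⟨a, ha⟩ := two_dvd_e n
  have hNat : (n+1)*(3*(n+1)-1) = 2*a := by
    have h3 : 3*(n+1)-1 = 3*n+2 := by omega
    rw [h3]; exact ha
  have h' : ((n:ℤ)+1) * (3*((n:ℤ)+1)-1) = 2*(a:ℤ) := by
    have hc : (((n+1)*(3*(n+1)-1) : ℕ) : ℤ) = 2*(a:ℤ) := by exact_mod_cast hNat
    rw [Nat.cast_mul, Nat.cast_sub (by omega)] at hc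
    push_cast at hc
    linear_combination hc
  rw [hsign, h', Int.mul_ediv_cancel_left _ (by norm_num), hNat,
      Nat.mul_div_cancel_left _ (by norm_num), zpow_natCast]
  simp

lemma f_neg (q : ℂ) (n : ℕ) :
    (((-((n:ℤ)+1)).sign : ℂ)) * q ^ ((-((n:ℤ)+1)) * (3*(-((n:ℤ)+1))-1)/2)
      = -(q ^ ((n+1)*(3*(n+1)-1)/2 + (n+1))) := by
  have hsign : (-((n:ℤ)+1)).sign = -1 := by
    rw [Int.sign_neg, Int.sign_eq_one_of_pos (by positivity)]
  obtain ⟨a, ha⟩ := two_dvd_e n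
  have hNat : (n+1)*(3*(n+1)-1) = 2*a := by
    have h3 : 3*(n+1)-1 = 3*n+2 := by omega
    rw [h3]; exact ha
  have h2 : (((n+1)*(3*n+2) : ℕ) : ℤ) = 2*(a:ℤ) := by exact_mod_cast ha
  have h' : (-((n:ℤ)+1)) * (3*(-((n:ℤ)+1))-1) = 2*((a:ℤ) + ((n:ℤ)+1)) := by
    push_cast at h2
    linear_combination h2
  rw [hsign, h', Int.mul_ediv_cancel_left _ (by norm_num), hNat]
  rw [Nat.mul_div_cancel_left _ (by norm_num : 0 < 2)]
  rw [show ((a:ℤ) + ((n:ℤ)+1)) = ((a + (n+1) : ℕ) : ℤ) by push_cast; ring, zpow_natCast]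
  simp

lemma int_sum (q : ℂ) (hq : ‖q‖ < 1) :
    ∑' m : ℤ, ((m.sign : ℂ)) * q ^ (m * (3*m-1)/2)
      = ∑' n : ℕ, (1 - q^(n+1)) * q^((n+1)*(3*(n+1)-1)/2) := by
  set f : ℤ → ℂ := fun m => (m.sign : ℂ) * q ^ (m*(3*m-1)/2) with hf
  have hps : ∀ n : ℕ, f (↑(n+1)) = q ^ ((n+1)*(3*(n+1)-1)/2) := by
    intro n
    have : ((n+1 : ℕ) : ℤ) = (n:ℤ)+1 := by push_cast; ring
    rw [hf]; simp only [this]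
    exact f_pos q n
  have h1 : Summable (fun n : ℕ => q ^ ((n+1)*(3*(n+1)-1)/2)) :=
    summable_pow_exp q hq _ (fun n => by have := e_ge n; omega)
  have h2 : Summable (fun n : ℕ => q ^ ((n+1)*(3*(n+1)-1)/2 + (n+1))) :=
    summable_pow_exp q hq _ (fun n => by have := e_ge n; omega)
  have hgs : Summable (fun n : ℕ => f ↑n) := by
    apply (summable_nat_add_iff 1).mp
    apply Summable.congr h1
    intro n; exact (hps n).symm
  have hneg : (fun n : ℕ => f (-(↑n+1))) = fun n : ℕ => -(q ^ ((n+1)*(3*(n+1)-1)/2 + (n+1))) := by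
    funext n; exact f_neg q n
  have hnegs : Summable (fun n : ℕ => f (-(↑n+1))) := by rw [hneg]; exact h2.neg
  have hsplit := tsum_of_nat_of_neg_add_one hgs hnegs
  have hzero : f ((0:ℕ):ℤ) = 0 := by rw [hf]; simp
  have hA : ∑' (n:ℕ), f ↑(n+1) = ∑' n:ℕ, q ^ ((n+1)*(3*(n+1)-1)/2) := tsum_congr hps
  have hB : ∑' (n:ℕ), f (-(↑n+1)) = ∑' n:ℕ, -(q ^ ((n+1)*(3*(n+1)-1)/2 + (n+1))) :=
    tsum_congr (fun n => f_neg q n)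
  rw [hsplit, hgs.tsum_eq_zero_add, hzero, hA, hB, zero_add, tsum_neg,
      ← sub_eq_add_neg, ← h1.tsum_sub h2]
  exact tsum_congr (fun n => by rw [pow_add]; ring)

/-- For |q|<1, `∑_{n∈ℤ} sgn(n) q^{n(3n-1)/2} = -∑_{n≥1} (-1)^n q^{n(n+1)/2}/(-q;q)_n`,
where the left side equals `∑_{n≥1} (1-q^n) q^{n(3n-1)/2}`. -/
theorem stmt_3 (q : ℂ) (hq : ‖q‖ < 1) :
    (∑' m : ℤ, (m.sign : ℂ) * q ^ (m * (3 * m - 1) / 2)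
        = ∑' n : ℕ, (1 - q ^ (n + 1)) * q ^ ((n + 1) * (3 * (n + 1) - 1) / 2)) ∧
    ∑' m : ℤ, (m.sign : ℂ) * q ^ (m * (3 * m - 1) / 2)
      = -∑' n : ℕ, (-1 : ℂ) ^ (n + 1) * q ^ ((n + 1) * (n + 2) / 2) / qPoch (-q) q (n + 1) := by
  constructor
  · exact int_sum q hq
  · rw [int_sum q hq]
    have ha := summable_a q hq
    have h1 : Summable (fun n : ℕ => q ^ ((n+1)*(3*(n+1)-1)/2)) :=
      summable_pow_exp q hq _ (fun n => by have := e_ge n; omega)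
    have h2 : Summable (fun n : ℕ => q ^ ((n+1)*(3*(n+1)-1)/2 + (n+1))) :=
      summable_pow_exp q hq _ (fun n => by have := e_ge n; omega)
    have hb : Summable (fun n : ℕ => (1 - q^(n+1)) * q^((n+1)*(3*(n+1)-1)/2)) := by
      apply Summable.congr (h1.sub h2)
      intro n; rw [pow_add]; ring
    have hA : Filter.Tendsto
        (fun N => ∑ n ∈ Finset.range N,
          -((-1:ℂ)^(n+1) * q^((n+1)*(n+2)/2) / qPoch (-q) q (n+1)))
        Filter.atTop
        (nhds (-∑' n : ℕ, (-1:ℂ)^(n+1) * q^((n+1)*(n+2)/2) / qPoch (-q) q (n+1))) :=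
      (ha.hasSum.neg).tendsto_sum_nat
    have heq : ∀ N, (∑ n ∈ Finset.range N,
          -((-1:ℂ)^(n+1) * q^((n+1)*(n+2)/2) / qPoch (-q) q (n+1)))
        = (∑ n ∈ Finset.range N, (1 - q^(n+1)) * q^((n+1)*(3*(n+1)-1)/2)) + Ec q N := by
      intro N
      linear_combination (-1 : ℂ) * (finId q hq N)
    have hB : Filter.Tendsto
        (fun N => ∑ n ∈ Finset.range N,
          -((-1:ℂ)^(n+1) * q^((n+1)*(n+2)/2) / qPoch (-q) q (n+1)))
        Filter.atTop
        (nhds ((∑' n : ℕ, (1 - q^(n+1)) * q^((n+1)*(3*(n+1)-1)/2)) + 0)) := by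
      apply Filter.Tendsto.congr (fun N => (heq N).symm)
      exact (hb.hasSum.tendsto_sum_nat).add (tendsto_Ec q hq)
    have huniq := tendsto_nhds_unique hA hB
    rw [add_zero] at huniq
    exact huniq.symm
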